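/- Let R = ℚ[x,y]/(xy) and A = R/y. Suppose R' is a flat R-algebra such that R'' := R'/yR' is a projective R'-module and x is a unit in R''. Then there exist z, z' ∈ R' with xz = 1 + yz', and the map (x y) : R' ⊕ R' → R' is a split surjection of R'-modules; however, the induced map A ⊕ A → A given by (x 0) is not surjective. -/

import Mathlib

noncomputable section

open MvPolynomial

/-- The ring `R = ℚ[x,y]/(xy)`. -/
abbrev RXY : Type :=
  MvPolynomial (Fin 2) ℚ ⧸ Ideal.span {(X 0 : MvPolynomial (Fin 2) ℚ) * X 1}

/-- The image of `x` in `R`. -/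
abbrev xR : RXY := Ideal.Quotient.mk _ (X 0)

/-- The image of `y` in `R`. -/
abbrev yR : RXY := Ideal.Quotient.mk _ (X 1)

/-- The `R`-algebra `A = R/y`. -/
abbrev AR : Type := RXY ⧸ Ideal.span {yR}

/-- The image of `x` in `A`. -/
abbrev xA : AR := Ideal.Quotient.mk _ xR

/-- Core of the proof that no flat `R`-algebra gives a flat replacement of `A = R/y`
(`R = ℚ[x,y]/(xy)`): if `R'` is a flat `R`-algebra such that `R'' = R'/yR'` is projective
over `R'` and `x` is a unit in `R''`, then there are `z, z' ∈ R'` with `xz = 1 + yz'`,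
the map `(x y) : R' ⊕ R' → R'` is a split surjection of `R'`-modules, yet the induced
map `(x 0) : A ⊕ A → A` is not surjective. -/
theorem no_flat_algebra_core (R' : Type) [CommRing R'] [Algebra RXY R']
    [Module.Flat RXY R']
    (hproj : Module.Projective R' (R' ⧸ Ideal.span {algebraMap RXY R' yR}))
    (hx : IsUnit (Ideal.Quotient.mk (Ideal.span {algebraMap RXY R' yR})
      (algebraMap RXY R' xR))) :
    (∃ z z' : R', algebraMap RXY R' xR * z = 1 + algebraMap RXY R' yR * z') ∧
    (∃ s : R' →ₗ[R'] R' × R',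
      ∀ r : R', algebraMap RXY R' xR * (s r).1 + algebraMap RXY R' yR * (s r).2 = r) ∧
    ¬ Function.Surjective (fun w : AR × AR => xA * w.1 + 0 * w.2) := by
  set x' := algebraMap RXY R' xR with hx'
  set y' := algebraMap RXY R' yR with hy'
  have h1 : ∃ z z' : R', x' * z = 1 + y' * z' := by
    obtain ⟨u, hu⟩ := hx
    obtain ⟨z, hz⟩ := Ideal.Quotient.mk_surjective
      ((u⁻¹ : (R' ⧸ Ideal.span {y'})ˣ) : R' ⧸ Ideal.span {y'})
    have hmul : Ideal.Quotient.mk (Ideal.span {y'}) (x' * z) = 1 := by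
      rw [map_mul, hz, ← hu, Units.mul_inv]
    have hm : x' * z - 1 ∈ Ideal.span {y'} := by
      rw [← Ideal.Quotient.eq_zero_iff_mem, map_sub, hmul, map_one, sub_self]
    rw [Ideal.mem_span_singleton] at hm
    obtain ⟨z', hz'⟩ := hm
    exact ⟨z, z', by linear_combination hz'⟩
  refine ⟨h1, ?_, ?_⟩
  · obtain ⟨z, z', hz⟩ := h1
    refine ⟨LinearMap.prod (z • LinearMap.id) ((-z') • LinearMap.id), fun r => ?_⟩
    simp only [LinearMap.prod_apply, Function.prod, LinearMap.smul_apply, LinearMap.id_apply,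
      smul_eq_mul]
    linear_combination r * hz
  · -- build the evaluation map AR → ℚ at (0,0)
    have hev0 : ∀ a ∈ Ideal.span {(X 0 : MvPolynomial (Fin 2) ℚ) * X 1},
        (aeval (fun _ => (0:ℚ))).toRingHom a = 0 := by
      intro a ha
      rw [Ideal.mem_span_singleton] at ha
      obtain ⟨c, rfl⟩ := ha
      simp
    set φ1 : RXY →+* ℚ := Ideal.Quotient.lift _ _ hev0 with hφ1
    have hev1 : ∀ a ∈ Ideal.span {yR}, φ1 a = 0 := by
      intro a ha
      rw [Ideal.mem_span_singleton] at ha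
      obtain ⟨c, rfl⟩ := ha
      have : φ1 yR = 0 := by
        simp [hφ1, Ideal.Quotient.lift_mk]
      rw [map_mul, this, zero_mul]
    set φ : AR →+* ℚ := Ideal.Quotient.lift _ φ1 hev1 with hφ
    have hφx : φ xA = 0 := by
      simp [hφ, hφ1, Ideal.Quotient.lift_mk]
    intro hsurj
    obtain ⟨w, hw⟩ := hsurj 1
    have := congrArg φ hw
    simp only [map_add, map_mul, map_one, hφx, zero_mul, map_zero, add_zero] at this
    exact zero_ne_one this

end
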